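/- Let K be a bounded self-adjoint operator on a Hilbert space with spectrum contained in [−λ, 1] for some λ ∈ (0,1). Then for every f in the space, ‖(I − K)f‖² + ((1+λ)/(1−λ))‖Kf‖² ≤ ((1+λ)/(1−λ))‖f‖². -/
import Mathlib


open scoped RealInnerProductSpace

-- Cauchy-Schwarz type bound for a positive operator
lemma aux_cs {H : Type*} [NormedAddCommGroup H] [InnerProductSpace ℝ H] [CompleteSpace H]
    (A : H →L[ℝ] H) (hA : IsSelfAdjoint A) (hpos : ∀ x, 0 ≤ ⟪A x, x⟫) (x : H) :
    ‖A x‖ ^ 2 ≤ ‖A‖ * ⟪A x, x⟫ := by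
  set p := ⟪A x, x⟫ with hp
  have hq : ⟪A x, A x⟫ = ‖A x‖ ^ 2 := real_inner_self_eq_norm_sq _
  have hr : ⟪A (A x), A x⟫ ≤ ‖A‖ * ‖A x‖ ^ 2 := by
    calc ⟪A (A x), A x⟫ ≤ ‖A (A x)‖ * ‖A x‖ := real_inner_le_norm _ _
    _ ≤ (‖A‖ * ‖A x‖) * ‖A x‖ := by
        have := A.le_opNorm (A x)
        nlinarith [norm_nonneg (A x)]
    _ = ‖A‖ * ‖A x‖ ^ 2 := by ring
  have hdisc : discrim ⟪A (A x), A x⟫ (2 * ‖A x‖ ^ 2) p ≤ 0 := by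
    apply discrim_le_zero
    intro t
    have h0 := hpos (x + t • A x)
    have hsym : ∀ u v : H, ⟪A u, v⟫ = ⟪u, A v⟫ := fun u v => by
      conv_lhs => rw [← hA.adjoint_eq]
      exact ContinuousLinearMap.adjoint_inner_left A v u
    have e1 : ⟪A (x + t • A x), x + t • A x⟫
        = p + 2 * ‖A x‖ ^ 2 * t + ⟪A (A x), A x⟫ * (t * t) := by
      have h3 : ⟪A (A x), x⟫ = ⟪A x, A x⟫ := by
        exact hsym (A x) x
      simp only [map_add, map_smul, inner_add_left, inner_add_right,
        real_inner_smul_left, real_inner_smul_right]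
      rw [h3, hq]; ring
    rw [e1] at h0; linarith
  rw [discrim] at hdisc
  have hp0 : 0 ≤ p := hpos x
  have hr0 : 0 ≤ ⟪A (A x), A x⟫ := hpos (A x)
  have hq2 : (‖A x‖ ^ 2) ^ 2 ≤ ‖A‖ * p * ‖A x‖ ^ 2 := by nlinarith [mul_le_mul_of_nonneg_right hr hp0]
  rcases eq_or_lt_of_le (sq_nonneg ‖A x‖) with h0 | h0
  · rw [← h0]; positivity
  · nlinarith

lemma aux_nonpos {H : Type*} [NormedAddCommGroup H] [InnerProductSpace ℝ H] [CompleteSpace H]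
    (T : H →L[ℝ] H) (hT : IsSelfAdjoint T)
    (hsp : ∀ μ ∈ spectrum ℝ T, μ ≤ 0) (f : H) : ⟪T f, f⟫ ≤ 0 := by
  by_contra hc
  push_neg at hc
  have hf0 : f ≠ 0 := by
    rintro rfl
    simp at hc
  set S : Set ℝ := {r | ∃ x : H, ‖x‖ = 1 ∧ r = ⟪T x, x⟫} with hS
  have hx₀ : ‖(‖f‖⁻¹ • f : H)‖ = 1 := by
    rw [norm_smul]
    simp [norm_ne_zero_iff.mpr hf0]
  have hSne : S.Nonempty := ⟨_, ‖f‖⁻¹ • f, hx₀, rfl⟩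
  have hSbdd : BddAbove S := by
    refine ⟨‖T‖, ?_⟩
    rintro r ⟨x, hx, rfl⟩
    calc ⟪T x, x⟫ ≤ ‖T x‖ * ‖x‖ := real_inner_le_norm _ _
    _ ≤ ‖T‖ * ‖x‖ * ‖x‖ := by nlinarith [T.le_opNorm x, norm_nonneg x]
    _ = ‖T‖ := by rw [hx]; ring
  set M := sSup S with hM
  have hMmem : ∀ x : H, ‖x‖ = 1 → ⟪T x, x⟫ ≤ M := fun x hx => le_csSup hSbdd ⟨x, hx, rfl⟩
  have hM0 : 0 < M := by
    have h1 : ⟪T (‖f‖⁻¹ • f), ‖f‖⁻¹ • f⟫ ≤ M := hMmem _ hx₀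
    have h2 : ⟪T (‖f‖⁻¹ • f), ‖f‖⁻¹ • f⟫ = ‖f‖⁻¹ * ‖f‖⁻¹ * ⟪T f, f⟫ := by
      simp only [map_smul, real_inner_smul_left, real_inner_smul_right]
      ring
    have hfpos : 0 < ‖f‖ := norm_pos_iff.mpr hf0
    rw [h2] at h1
    have : 0 < ‖f‖⁻¹ * ‖f‖⁻¹ * ⟪T f, f⟫ := by positivity
    linarith
  -- A := M • 1 - T
  set A : H →L[ℝ] H := M • (1 : H →L[ℝ] H) - T with hA
  have hAsa : IsSelfAdjoint A := by
    rw [hA]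
    exact ((IsSelfAdjoint.all (M : ℝ)).smul (IsSelfAdjoint.one _)).sub hT
  have hApos : ∀ x, 0 ≤ ⟪A x, x⟫ := by
    intro x
    have hAx : ⟪A x, x⟫ = M * ‖x‖ ^ 2 - ⟪T x, x⟫ := by
      simp [hA, inner_sub_left, real_inner_smul_left, real_inner_self_eq_norm_sq]
    rcases eq_or_ne x 0 with rfl | hx0
    · simp
    · have hxpos : 0 < ‖x‖ := norm_pos_iff.mpr hx0
      have hu : ‖(‖x‖⁻¹ • x : H)‖ = 1 := by
        rw [norm_smul]; simp [norm_ne_zero_iff.mpr hx0]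
      have h1 := hMmem _ hu
      have h2 : ⟪T (‖x‖⁻¹ • x), ‖x‖⁻¹ • x⟫ = ‖x‖⁻¹ * ‖x‖⁻¹ * ⟪T x, x⟫ := by
        simp [map_smul, real_inner_smul_left, real_inner_smul_right]
        ring
      rw [h2] at h1
      rw [hAx]
      have hne : ‖x‖ ≠ 0 := ne_of_gt hxpos
      have hxx : ‖x‖⁻¹ * ‖x‖⁻¹ * (‖x‖ * ‖x‖) = 1 := by field_simp
      have h4 : ‖x‖⁻¹ * ‖x‖⁻¹ * ⟪T x, x⟫ * (‖x‖ * ‖x‖) = ⟪T x, x⟫ := by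
        calc ‖x‖⁻¹ * ‖x‖⁻¹ * ⟪T x, x⟫ * (‖x‖ * ‖x‖)
            = (‖x‖⁻¹ * ‖x‖⁻¹ * (‖x‖ * ‖x‖)) * ⟪T x, x⟫ := by ring
        _ = ⟪T x, x⟫ := by rw [hxx]; ring
      have h5 : M * ‖x‖ ^ 2 = M * (‖x‖ * ‖x‖) := by ring
      linarith [mul_le_mul_of_nonneg_right h1 (mul_self_nonneg ‖x‖)]
  -- M is in the spectrum would contradict hsp; so M ∉ spectrum, A is a unit
  have hMns : M ∉ spectrum ℝ T := fun h => absurd (hsp M h) (not_le.mpr hM0)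
  have hAunit : IsUnit A := by
    rw [spectrum.notMem_iff] at hMns
    have : (algebraMap ℝ (H →L[ℝ] H)) M - T = A := by
      rw [Algebra.algebraMap_eq_smul_one, hA]
    rwa [this] at hMns
  obtain ⟨u, hu⟩ := hAunit
  have hinv : ∀ x : H, ‖x‖ ≤ ‖(↑u⁻¹ : H →L[ℝ] H)‖ * ‖A x‖ := by
    intro x
    have h1 : (↑u⁻¹ : H →L[ℝ] H) (A x) = x := by
      have : (↑u⁻¹ * A : H →L[ℝ] H) = 1 := by rw [← hu]; exact u.inv_mul
      calc (↑u⁻¹ : H →L[ℝ] H) (A x) = ((↑u⁻¹ * A : H →L[ℝ] H)) x := rfl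
      _ = x := by rw [this]; rfl
    calc ‖x‖ = ‖(↑u⁻¹ : H →L[ℝ] H) (A x)‖ := by rw [h1]
    _ ≤ ‖(↑u⁻¹ : H →L[ℝ] H)‖ * ‖A x‖ := ContinuousLinearMap.le_opNorm _ _
  set B := ‖(↑u⁻¹ : H →L[ℝ] H)‖ with hB
  have hB0 : 0 < B := by
    have := hinv (‖f‖⁻¹ • f)
    rw [hx₀] at this
    nlinarith [norm_nonneg (A (‖f‖⁻¹ • f)), norm_nonneg (↑u⁻¹ : H →L[ℝ] H)]
  have hA0 : 0 < ‖A‖ := by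
    have h1 := hinv (‖f‖⁻¹ • f)
    rw [hx₀] at h1
    have h2 := A.le_opNorm (‖f‖⁻¹ • f)
    rw [hx₀] at h2
    nlinarith
  -- every unit vector has ⟪T x, x⟫ ≤ M - 1/(B^2 * ‖A‖), contradiction with sSup
  have hub : ∀ r ∈ S, r ≤ M - 1 / (B ^ 2 * ‖A‖) := by
    rintro r ⟨x, hx, rfl⟩
    have h1 := hinv x
    rw [hx] at h1
    have h2 := aux_cs A hAsa hApos x
    have hAx : ⟪A x, x⟫ = M * ‖x‖ ^ 2 - ⟪T x, x⟫ := by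
      simp [hA, inner_sub_left, real_inner_smul_left, real_inner_self_eq_norm_sq]
    rw [hAx, hx] at h2
    have h3 : 1 ≤ B ^ 2 * ‖A x‖ ^ 2 := by nlinarith [norm_nonneg (A x)]
    have h4 : 1 ≤ B ^ 2 * (‖A‖ * (M * 1 ^ 2 - ⟪T x, x⟫)) := by nlinarith [sq_nonneg B]
    have h5 : 1 / (B ^ 2 * ‖A‖) ≤ M - ⟪T x, x⟫ := by
      rw [div_le_iff₀ (by positivity)]
      nlinarith
    linarith
  have := csSup_le hSne hub
  rw [← hM] at this
  have : (0:ℝ) < 1 / (B ^ 2 * ‖A‖) := by positivity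
  linarith [csSup_le hSne hub]

lemma aux_expand {A : Type*} [Ring A] [Algebra ℝ A] (p q : ℝ) (K : A) :
    (p • (1 : A) - K) * (q • (1 : A) - K) = (p * q) • (1 : A) - (p + q) • K + K * K := by
  simp only [Algebra.smul_def, mul_one, map_mul, map_add]
  rw [sub_mul, mul_sub, mul_sub, ← Algebra.commutes q K]
  noncomm_ring


/-- If `K` is a bounded self-adjoint operator on a Hilbert space with spectrum contained
in `[−λ, 1]` for some `λ ∈ (0,1)`, then for every `f`,
`‖(I − K)f‖² + ((1+λ)/(1−λ))‖Kf‖² ≤ ((1+λ)/(1−λ))‖f‖²`. -/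
theorem stmt4 {H : Type*} [NormedAddCommGroup H] [InnerProductSpace ℝ H] [CompleteSpace H]
    (K : H →L[ℝ] H) (hKsa : IsSelfAdjoint K)
    (lam : ℝ) (hlam : lam ∈ Set.Ioo (0 : ℝ) 1)
    (hspec : spectrum ℝ K ⊆ Set.Icc (-lam) 1) (f : H) :
    ‖((1 : H →L[ℝ] H) - K) f‖ ^ 2 + ((1 + lam) / (1 - lam)) * ‖K f‖ ^ 2
      ≤ ((1 + lam) / (1 - lam)) * ‖f‖ ^ 2 := by
  obtain ⟨hlam0, hlam1⟩ := hlam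
  have hlamne : (1 : ℝ) - lam ≠ 0 := by linarith
  set a : ℝ := (1 + lam) / (1 - lam) with ha
  set T : H →L[ℝ] H := (1 + a) • (K * K) - (2 : ℝ) • K + (1 - a) • (1 : H →L[ℝ] H) with hT
  have hTsa : IsSelfAdjoint T := by
    rw [hT]
    have hKK : IsSelfAdjoint (K * K) := by
      simp [IsSelfAdjoint, star_mul, hKsa.star_eq]
    exact (((IsSelfAdjoint.all (1 + a)).smul hKK).sub
      ((IsSelfAdjoint.all (2 : ℝ)).smul hKsa)).add
      ((IsSelfAdjoint.all (1 - a)).smul (IsSelfAdjoint.one _))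
  have hTsp : ∀ μ ∈ spectrum ℝ T, μ ≤ 0 := by
    intro μ hμ
    by_contra hμ0
    push_neg at hμ0
    set s : ℝ := Real.sqrt ((1 + lam) ^ 2 + 2 * μ * (1 - lam)) with hs
    have hD : (0 : ℝ) ≤ (1 + lam) ^ 2 + 2 * μ * (1 - lam) := by nlinarith
    have hs2 : s ^ 2 = (1 + lam) ^ 2 + 2 * μ * (1 - lam) := Real.sq_sqrt hD
    have hsgt : 1 + lam < s := by
      have h1 : (1 + lam) ^ 2 < s ^ 2 := by rw [hs2]; nlinarith
      nlinarith [Real.sqrt_nonneg ((1 + lam) ^ 2 + 2 * μ * (1 - lam)), hs]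
    set p : ℝ := ((1 - lam) + s) / 2 with hp
    set q : ℝ := ((1 - lam) - s) / 2 with hq
    have hp1 : 1 < p := by rw [hp]; linarith
    have hql : q < -lam := by rw [hq]; linarith
    have hsum : p + q = 1 - lam := by rw [hp, hq]; ring
    have hprod : p * q = -lam - μ * (1 - lam) / 2 := by
      have : p * q = ((1 - lam) ^ 2 - s ^ 2) / 4 := by rw [hp, hq]; ring
      rw [this, hs2]; ring
    have hpu : IsUnit (p • (1 : H →L[ℝ] H) - K) := by
      rw [← Algebra.algebraMap_eq_smul_one]
      rw [← spectrum.notMem_iff]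
      intro h
      have := hspec h
      rw [Set.mem_Icc] at this
      linarith [this.2]
    have hqu : IsUnit (q • (1 : H →L[ℝ] H) - K) := by
      rw [← Algebra.algebraMap_eq_smul_one]
      rw [← spectrum.notMem_iff]
      intro h
      have := hspec h
      rw [Set.mem_Icc] at this
      linarith [this.1]
    set c : ℝ := -2 / (1 - lam) with hc
    have hcne : c ≠ 0 := by
      rw [hc]
      intro h
      rw [div_eq_zero_iff] at h
      rcases h with h | h <;> [linarith; exact hlamne h]
    have hcu : IsUnit (c • (1 : H →L[ℝ] H)) := by
      rw [← Algebra.algebraMap_eq_smul_one]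
      exact (isUnit_iff_ne_zero.mpr hcne).map (algebraMap ℝ (H →L[ℝ] H))
    have expand := aux_expand p q K
    have key : (algebraMap ℝ (H →L[ℝ] H)) μ - T
        = c • ((p • (1 : H →L[ℝ] H) - K) * (q • (1 : H →L[ℝ] H) - K)) := by
      rw [expand, hsum, hprod, Algebra.algebraMap_eq_smul_one, hT, hc, ha]
      match_scalars <;> field_simp <;> ring
    have : IsUnit ((algebraMap ℝ (H →L[ℝ] H)) μ - T) := by
      rw [key, Algebra.smul_def]
      exact ((isUnit_iff_ne_zero.mpr hcne).map (algebraMap ℝ (H →L[ℝ] H))).mul (hpu.mul hqu)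
    rw [← spectrum.notMem_iff] at this
    exact this hμ
  have hTf := aux_nonpos T hTsa hTsp f
  have hsymK : ∀ u v : H, ⟪K u, v⟫ = ⟪u, K v⟫ := fun u v => by
    conv_lhs => rw [← hKsa.adjoint_eq]
    exact ContinuousLinearMap.adjoint_inner_left K v u
  have hTf2 : ⟪T f, f⟫ = (1 + a) * ‖K f‖ ^ 2 - 2 * ⟪K f, f⟫ + (1 - a) * ‖f‖ ^ 2 := by
    rw [hT]
    simp only [ContinuousLinearMap.add_apply, ContinuousLinearMap.sub_apply,
      ContinuousLinearMap.smul_apply, ContinuousLinearMap.mul_apply,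
      ContinuousLinearMap.one_apply, inner_add_left, inner_sub_left, real_inner_smul_left]
    have h1 : ⟪K (K f), f⟫ = ‖K f‖ ^ 2 := by
      rw [hsymK (K f) f, real_inner_comm, ← real_inner_self_eq_norm_sq]
    rw [h1, real_inner_self_eq_norm_sq]
  have hnorm : ‖((1 : H →L[ℝ] H) - K) f‖ ^ 2 = ‖f‖ ^ 2 - 2 * ⟪K f, f⟫ + ‖K f‖ ^ 2 := by
    have h0 : ((1 : H →L[ℝ] H) - K) f = f - K f := by
      simp [ContinuousLinearMap.sub_apply]
    rw [h0, norm_sub_sq_real, real_inner_comm]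
  rw [hnorm]
  rw [hTf2] at hTf
  linarith
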